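/- The Hoffman logarithm log_H is a two-sided inverse of the Hoffman exponential exp_H on K⟨A⟩: exp_H ∘ log_H = id and log_H ∘ exp_H = id. -/

import Mathlib

open List

/-- Left-to-right nested bracket of a (nonempty) list of letters. -/
def brOfList {A : Type} [Inhabited A] (br : A → A → A) : List A → A
  | [] => default
  | [a] => a
  | a :: b :: l => br a (brOfList br (b :: l))

/-- The composition action `λ ∘ w`. -/
def compAction {A : Type} [Inhabited A] (br : A → A → A) (w : List A)
    (c : Composition w.length) : List A :=
  (w.splitWrtComposition c).map (brOfList br)

section Bracket
variable {A : Type} [Inhabited A] (br : A → A → A)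

lemma brOfList_cons (a : A) {l : List A} (h : l ≠ []) :
    brOfList br (a :: l) = br a (brOfList br l) := by
  cases l with
  | nil => simp at h
  | cons b t => rfl

lemma brOfList_append (hassoc : ∀ a b c, br (br a b) c = br a (br b c))
    {l1 l2 : List A} (h1 : l1 ≠ []) (h2 : l2 ≠ []) :
    brOfList br (l1 ++ l2) = br (brOfList br l1) (brOfList br l2) := by
  induction l1 with
  | nil => simp at h1
  | cons a t ih =>
    cases t with
    | nil => exact brOfList_cons br a h2
    | cons b s =>
      rw [cons_append, brOfList_cons br a (by simp), ih (by simp), brOfList_cons br a (by simp)]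
      exact (hassoc _ _ _).symm

lemma brOfList_flatten (hassoc : ∀ a b c, br (br a b) c = br a (br b c))
    {L : List (List A)} (h : ∀ l ∈ L, l ≠ []) :
    brOfList br (L.map (brOfList br)) = brOfList br L.flatten := by
  induction L with
  | nil => rfl
  | cons l T ih =>
    cases T with
    | nil => simp [brOfList]
    | cons t T' =>
      have hne : (t :: T').flatten ≠ [] := by
        have := h t (by simp)
        simp only [flatten_cons]
        intro hc
        rcases append_eq_nil_iff.mp hc with ⟨h1, _⟩
        exact this h1
      rw [map_cons, brOfList_cons br _ (by simp), ih (fun l hl => h l (by simp [hl]))]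
      rw [show (l :: t :: T').flatten = l ++ (t :: T').flatten from rfl]
      rw [brOfList_append br hassoc (h l (by simp)) hne]
end Bracket

section SplitAux
variable {α β : Type*}

lemma splitAux_map (g : α → β) : ∀ (ns : List ℕ) (l : List α),
    splitWrtCompositionAux (l.map g) ns = (splitWrtCompositionAux l ns).map (map g)
  | [], l => rfl
  | n :: ns, l => by
    simp [splitWrtCompositionAux_cons, ← map_drop, ← map_take, splitAux_map g ns]

lemma flatten_take_splitAux : ∀ (ns : List ℕ) (m : ℕ) (l : List α),
    (((splitWrtCompositionAux l ns)).take m).flatten = l.take ((ns.take m).sum)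
  | [], m, l => by simp [splitWrtCompositionAux]
  | n :: ns, 0, l => by simp
  | n :: ns, m + 1, l => by
    rw [splitWrtCompositionAux_cons, take_succ_cons, flatten_cons, flatten_take_splitAux ns m,
      take_succ_cons, sum_cons, take_add]

lemma drop_splitAux : ∀ (ns : List ℕ) (m : ℕ) (l : List α),
    (splitWrtCompositionAux l ns).drop m
      = splitWrtCompositionAux (l.drop ((ns.take m).sum)) (ns.drop m)
  | [], m, l => by simp [splitWrtCompositionAux]
  | n :: ns, 0, l => by simp
  | n :: ns, m + 1, l => by
    simp [splitWrtCompositionAux_cons, drop_splitAux ns m, drop_drop, Nat.add_comm]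

lemma splitAux_splitAux : ∀ (ms ns : List ℕ) (l : List α),
    ((splitWrtCompositionAux l ns).splitWrtCompositionAux ms).map flatten
      = splitWrtCompositionAux l ((splitWrtCompositionAux ns ms).map sum)
  | [], ns, l => rfl
  | m :: ms, ns, l => by
    simp only [splitWrtCompositionAux_cons, map_cons, sum_cons, flatten_take_splitAux,
      drop_splitAux, splitAux_splitAux ms]

lemma splitAux_ones : ∀ (l : List α),
    splitWrtCompositionAux l (replicate l.length 1) = l.map (fun a => [a])
  | [] => rfl
  | a :: l => by
    rw [length_cons, replicate_succ, splitWrtCompositionAux_cons, map_cons]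
    simp [splitAux_ones l]

lemma mem_of_mem_splitAux : ∀ (ms : List ℕ) (l : List α) (t : List α) (x : α),
    t ∈ splitWrtCompositionAux l ms → x ∈ t → x ∈ l
  | [], l, t, x => by simp [splitWrtCompositionAux]
  | m :: ms, l, t, x => by
    rw [splitWrtCompositionAux_cons, mem_cons]
    rintro (rfl | ht) hx
    · exact mem_of_mem_take hx
    · exact mem_of_mem_drop (mem_of_mem_splitAux ms _ t x ht hx)
end SplitAux

def creindex {m n : ℕ} (h : m = n) (c : Composition m) : Composition n :=
  ⟨c.blocks, c.blocks_pos, by rw [c.blocks_sum, h]⟩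

@[simp] lemma creindex_blocks {m n : ℕ} (h : m = n) (c : Composition m) :
    (creindex h c).blocks = c.blocks := rfl

def creindexEquiv {m n : ℕ} (h : m = n) : Composition m ≃ Composition n where
  toFun := creindex h
  invFun := creindex h.symm
  left_inv c := by cases c; rfl
  right_inv c := by cases c; rfl

section CompAction
variable {A : Type} [Inhabited A] (br : A → A → A)

lemma compAction_length (w : List A) (c : Composition w.length) :
    (compAction br w c).length = c.length := by
  simp [compAction, length_splitWrtComposition]

lemma compAction_ones (w : List A) : compAction br w (Composition.ones w.length) = w := by
  have h1 : (Composition.ones w.length).blocks = replicate w.length 1 := rfl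
  rw [compAction, splitWrtComposition, h1, splitAux_ones, map_map]
  have h2 : (brOfList br ∘ fun a => [a]) = id := by funext a; rfl
  rw [h2, map_id]

lemma compAction_compAction (hassoc : ∀ a b c, br (br a b) c = br a (br b c))
    (w : List A) (μ : Composition w.length) (lam : Composition μ.length) :
    compAction br (compAction br w μ)
        (creindex (compAction_length br w μ).symm lam) = compAction br w (μ.gather lam) := by
  have hS : ∀ s ∈ w.splitWrtComposition μ, s ≠ [] := by
    intro s hs hnil
    have hml := map_length_splitWrtComposition w μ
    have h0 : (0 : ℕ) ∈ μ.blocks := by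
      rw [← hml]
      exact List.mem_map.2 ⟨s, hs, by simp [hnil]⟩
    exact absurd (μ.blocks_pos h0) (by simp)
  simp only [compAction, splitWrtComposition, creindex_blocks]
  rw [splitAux_map, map_map]
  have hgb : (μ.gather lam).blocks
      = ((μ.blocks.splitWrtCompositionAux lam.blocks).map sum) := rfl
  rw [hgb, ← splitAux_splitAux, map_map]
  refine List.map_congr_left (fun t ht => ?_)
  have hne : ∀ s ∈ t, s ≠ [] := fun s hs =>
    hS s (mem_of_mem_splitAux _ _ _ _ ht hs)
  exact brOfList_flatten br hassoc hne
end CompAction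

open Finset in
lemma master {A : Type} [Inhabited A] {K : Type} [Field K]
    (br : A → A → A) (hassoc : ∀ a b c, br (br a b) c = br a (br b c))
    (vp vq : ℕ → K)
    (hscal : ∀ k : ℕ, 0 < k →
      (∑ c : Composition k, vq c.length * ((c.blocks.map vp).prod)) = if k = 1 then 1 else 0)
    (w : List A) :
    (∑ μ : Composition w.length, ((μ.blocks.map vp).prod) •
      ∑ lam : Composition (compAction br w μ).length,
        ((lam.blocks.map vq).prod) •
          Finsupp.single (compAction br (compAction br w μ) lam) (1:K))
    = Finsupp.single w 1 := by
  classical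
  have step1 : ∀ μ : Composition w.length,
      (∑ lam : Composition (compAction br w μ).length,
        ((lam.blocks.map vq).prod) •
          Finsupp.single (compAction br (compAction br w μ) lam) (1:K))
      = ∑ lam : Composition μ.length,
        ((lam.blocks.map vq).prod) •
          Finsupp.single (compAction br w (μ.gather lam)) (1:K) := by
    intro μ
    rw [← Equiv.sum_comp (creindexEquiv (compAction_length br w μ).symm)
      (fun lam => ((lam.blocks.map vq).prod) •
          Finsupp.single (compAction br (compAction br w μ) lam) (1:K))]
    refine Finset.sum_congr rfl fun lam _ => ?_
    have h1 : (creindexEquiv (compAction_length br w μ).symm lam)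
        = creindex (compAction_length br w μ).symm lam := rfl
    rw [h1, creindex_blocks, compAction_compAction br hassoc]
  simp only [step1, Finset.smul_sum, smul_smul]
  have h1 : (∑ p : Σ a : Composition w.length, Composition a.length,
      ((p.1.blocks.map vp).prod * ((p.2.blocks.map vq).prod)) •
        Finsupp.single (compAction br w (p.1.gather p.2)) (1:K))
      = ∑ μ : Composition w.length, ∑ lam : Composition μ.length,
      ((μ.blocks.map vp).prod * ((lam.blocks.map vq).prod)) •
        Finsupp.single (compAction br w (μ.gather lam)) (1:K) := by
    rw [← Finset.univ_sigma_univ, Finset.sum_sigma]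
  rw [← h1, ← Equiv.sum_comp (Composition.sigmaEquivSigmaPi w.length).symm
    (fun p : (Σ a : Composition w.length, Composition a.length) =>
      ((p.1.blocks.map vp).prod * ((p.2.blocks.map vq).prod)) •
        Finsupp.single (compAction br w (p.1.gather p.2)) (1:K))]
  rw [← Finset.univ_sigma_univ, Finset.sum_sigma]
  have key : ∀ ν : Composition w.length,
      (∑ ds : (i : Fin ν.length) → Composition (ν.blocksFun i),
        ((((Composition.sigmaEquivSigmaPi w.length).symm ⟨ν, ds⟩).1.blocks.map vp).prod *
          ((((Composition.sigmaEquivSigmaPi w.length).symm ⟨ν, ds⟩).2.blocks.map vq).prod)) •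
          Finsupp.single (compAction br w
            (((Composition.sigmaEquivSigmaPi w.length).symm ⟨ν, ds⟩).1.gather
              ((Composition.sigmaEquivSigmaPi w.length).symm ⟨ν, ds⟩).2)) (1:K))
      = (if ν = Composition.ones w.length then (1:K) else 0) •
          Finsupp.single (compAction br w ν) (1:K) := by
    intro ν
    have hgather : ∀ ds : (i : Fin ν.length) → Composition (ν.blocksFun i),
        (((Composition.sigmaEquivSigmaPi w.length).symm ⟨ν, ds⟩).1.gather
          ((Composition.sigmaEquivSigmaPi w.length).symm ⟨ν, ds⟩).2) = ν := fun ds =>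
      congrArg Sigma.fst
        (Equiv.apply_symm_apply (Composition.sigmaEquivSigmaPi w.length) ⟨ν, ds⟩)
    have hblocks1 : ∀ ds : (i : Fin ν.length) → Composition (ν.blocksFun i),
        ((Composition.sigmaEquivSigmaPi w.length).symm ⟨ν, ds⟩).1.blocks
          = (List.ofFn fun j => (ds j).blocks).flatten := fun _ => rfl
    have hblocks2 : ∀ ds : (i : Fin ν.length) → Composition (ν.blocksFun i),
        ((Composition.sigmaEquivSigmaPi w.length).symm ⟨ν, ds⟩).2.blocks
          = List.ofFn fun j => (ds j).length := fun _ => rfl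
    simp only [hgather, hblocks1, hblocks2]
    rw [← Finset.sum_smul]
    congr 1
    have hterm : ∀ ds : (i : Fin ν.length) → Composition (ν.blocksFun i),
        (((List.ofFn fun j => (ds j).blocks).flatten.map vp).prod *
          (((List.ofFn fun j => (ds j).length).map vq).prod))
        = ∏ j : Fin ν.length, (vq (ds j).length * (((ds j).blocks.map vp).prod)) := by
      intro ds
      rw [List.map_flatten, List.map_ofFn, List.prod_flatten, List.map_ofFn, List.map_ofFn,
        List.prod_ofFn, List.prod_ofFn, Finset.prod_mul_distrib]
      rw [mul_comm]
      rfl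
    simp only [hterm]
    rw [← Fintype.prod_sum (fun (j : Fin ν.length) (c : Composition (ν.blocksFun j)) =>
      vq c.length * ((c.blocks.map vp).prod))]
    have hone : ∀ j : Fin ν.length,
        (∑ c : Composition (ν.blocksFun j), vq c.length * ((c.blocks.map vp).prod))
          = if ν.blocksFun j = 1 then 1 else 0 := fun j =>
      hscal _ (ν.blocks_pos' j.1 j.2)
    simp only [hone]
    have hiff : (∀ j, ν.blocksFun j = 1) ↔ ν = Composition.ones w.length := by
      rw [Composition.eq_ones_iff, ← Composition.ofFn_blocksFun ν, List.forall_mem_ofFn_iff]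
    by_cases hν : ν = Composition.ones w.length
    · have hall := hiff.mpr hν
      simp [hall, hν]
    · rw [if_neg hν]
      obtain ⟨j, hj⟩ := not_forall.mp (fun hall => hν (hiff.mp hall))
      exact Finset.prod_eq_zero (Finset.mem_univ j) (if_neg hj)
  simp only [key, ite_smul, one_smul, zero_smul]
  rw [Finset.sum_ite_eq' Finset.univ (Composition.ones w.length)
    (fun ν => Finsupp.single (compAction br w ν) (1:K))]
  simp [compAction_ones]

section Scalar
open Finset PowerSeries
variable {K : Type} [Field K] [CharZero K]

lemma length_le_sum_of_pos : ∀ (l : List ℕ), (∀ x ∈ l, 0 < x) → l.length ≤ l.sum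
  | [], _ => le_refl 0
  | a :: l, h => by
    have h1 := h a List.mem_cons_self
    have h2 := length_le_sum_of_pos l (fun x hx => h x (mem_cons_of_mem a hx))
    simp only [List.length_cons, List.sum_cons]
    omega

/-- The finset of compositions of `n` as lists. -/
noncomputable def comps (n : ℕ) : Finset (List ℕ) :=
  Finset.univ.image (fun c : Composition n => c.blocks)

lemma mem_comps {n : ℕ} {l : List ℕ} : l ∈ comps n ↔ l.sum = n ∧ ∀ x ∈ l, 0 < x := by
  constructor
  · intro h
    obtain ⟨c, _, rfl⟩ := Finset.mem_image.1 h
    exact ⟨c.blocks_sum, fun x hx => c.blocks_pos hx⟩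
  · rintro ⟨h1, h2⟩
    exact Finset.mem_image.2 ⟨⟨l, fun {i} hi => h2 i hi, h1⟩, Finset.mem_univ _, rfl⟩

lemma sum_comps {M : Type*} [AddCommMonoid M] (n : ℕ) (g : List ℕ → M) :
    (∑ c : Composition n, g c.blocks) = ∑ l ∈ comps n, g l :=
  (Finset.sum_image (fun c _ c' _ h => Composition.ext h)).symm

lemma comps_zero : comps 0 = {[]} := by
  ext l
  rw [mem_comps, Finset.mem_singleton]
  constructor
  · rintro ⟨h1, h2⟩
    cases l with
    | nil => rfl
    | cons a t =>
      have := h2 a List.mem_cons_self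
      simp only [List.sum_cons] at h1
      omega
  · rintro rfl
    exact ⟨rfl, by simp⟩

lemma ne_nil_of_mem_comps {n : ℕ} {l : List ℕ} (h : l ∈ comps (n+1)) : l ≠ [] := by
  rintro rfl
  simp [mem_comps] at h

lemma sum_comps_succ {M : Type*} [AddCommMonoid M] (n : ℕ) (g : List ℕ → M) :
    ∑ l ∈ comps (n+1), g l
      = ∑ k ∈ Finset.range (n+1), ∑ l ∈ comps k, g ((n+1-k) :: l) := by
  rw [Finset.sum_sigma' (Finset.range (n+1)) (fun k => comps k) (fun k l => g ((n+1-k) :: l))]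
  refine Finset.sum_nbij' (fun l => ⟨n + 1 - l.headI, l.tail⟩)
    (fun p => (n + 1 - p.1) :: p.2) ?_ ?_ ?_ ?_ ?_
  · intro l hl
    obtain ⟨a, t, rfl⟩ : ∃ a t, l = a :: t := by
      rcases l with _ | ⟨a, t⟩
      · exact absurd rfl (ne_nil_of_mem_comps hl)
      · exact ⟨a, t, rfl⟩
    rw [mem_comps] at hl
    obtain ⟨h1, h2⟩ := hl
    have ha := h2 a List.mem_cons_self
    simp only [List.sum_cons] at h1
    simp only [List.headI_cons, List.tail_cons, Finset.mem_sigma, Finset.mem_range, mem_comps]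
    refine ⟨by omega, by omega, fun x hx => h2 x (mem_cons_of_mem a hx)⟩
  · rintro ⟨k, l⟩ hp
    simp only [Finset.mem_sigma, Finset.mem_range, mem_comps] at hp
    obtain ⟨hk, h1, h2⟩ := hp
    dsimp only
    rw [mem_comps]
    constructor
    · simp only [List.sum_cons]; omega
    · intro x hx
      rcases mem_cons.1 hx with rfl | hx'
      · omega
      · exact h2 x hx'
  · intro l hl
    obtain ⟨a, t, rfl⟩ : ∃ a t, l = a :: t := by
      rcases l with _ | ⟨a, t⟩
      · exact absurd rfl (ne_nil_of_mem_comps hl)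
      · exact ⟨a, t, rfl⟩
    rw [mem_comps] at hl
    obtain ⟨h1, h2⟩ := hl
    have ha := h2 a List.mem_cons_self
    simp only [List.sum_cons] at h1
    simp only [List.headI_cons, List.tail_cons]
    congr 1
    omega
  · rintro ⟨k, l⟩ hp
    simp only [Finset.mem_sigma, Finset.mem_range, mem_comps] at hp
    obtain ⟨hk, h1, h2⟩ := hp
    dsimp only
    simp only [List.headI_cons, List.tail_cons]
    congr 1
    omega
  · intro l hl
    obtain ⟨a, t, rfl⟩ : ∃ a t, l = a :: t := by
      rcases l with _ | ⟨a, t⟩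
      · exact absurd rfl (ne_nil_of_mem_comps hl)
      · exact ⟨a, t, rfl⟩
    rw [mem_comps] at hl
    obtain ⟨h1, h2⟩ := hl
    have ha := h2 a List.mem_cons_self
    simp only [List.sum_cons] at h1
    simp only [List.headI_cons, List.tail_cons]
    congr 2
    omega

/-- The power series `∑_{k ≥ 1} vp k X^k`. -/
noncomputable def Lps (vp : ℕ → K) : PowerSeries K :=
  PowerSeries.mk fun k => if k = 0 then 0 else vp k

lemma coeff_Lps (vp : ℕ → K) (i : ℕ) :
    coeff i (Lps vp) = if i = 0 then 0 else vp i := coeff_mk _ _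

lemma coeff_Lpow (vp : ℕ → K) : ∀ (m n : ℕ),
    coeff n ((Lps vp) ^ m) = ∑ l ∈ comps n, if l.length = m then ((l.map vp).prod) else 0
  | 0, n => by
    rw [pow_zero, coeff_one]
    cases n with
    | zero => simp [comps_zero]
    | succ k =>
      rw [if_neg (Nat.succ_ne_zero k)]
      refine (Finset.sum_eq_zero fun l hl => ?_).symm
      rw [if_neg]
      intro hlen
      exact ne_nil_of_mem_comps hl (List.length_eq_zero_iff.1 hlen)
  | m + 1, n => by
    rw [pow_succ', coeff_mul, Finset.Nat.sum_antidiagonal_eq_sum_range_succ_mk]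
    cases n with
    | zero =>
      simp only [Finset.range_one, Finset.sum_singleton, coeff_Lps, if_pos rfl, zero_mul]
      rw [comps_zero]
      simp
    | succ N =>
      rw [sum_comps_succ N (fun l => if l.length = m + 1 then ((l.map vp).prod) else 0)]
      have hterm : ∀ k, ∑ l ∈ comps k,
          (if ((N+1-k) :: l).length = m + 1 then ((((N+1-k) :: l).map vp).prod) else 0)
          = vp (N+1-k) * coeff k ((Lps vp) ^ m) := by
        intro k
        rw [coeff_Lpow vp m k, Finset.mul_sum]
        refine Finset.sum_congr rfl fun l _ => ?_
        simp only [List.length_cons, List.map_cons, List.prod_cons, Nat.succ_inj, mul_ite, mul_zero]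
      simp only [hterm]
      rw [Finset.sum_range_succ']
      simp only [coeff_Lps, Nat.succ_ne_zero, eq_self_iff_true, if_true, if_false, zero_mul,
        add_zero]
      rw [← Finset.sum_range_reflect (fun k => vp (N+1-k) * coeff k ((Lps vp) ^ m)) (N+1)]
      refine Finset.sum_congr rfl fun j hj => ?_
      rw [Finset.mem_range] at hj
      have e1 : N + 1 - (N + 1 - 1 - j) = j + 1 := by omega
      have e2 : N + 1 - 1 - j = N - j := by omega
      have e3 : N + 1 - (j + 1) = N - j := by omega
      rw [e1, e2, e3]

lemma coeff_Lpow_eq_zero (vp : ℕ → K) {m n : ℕ} (h : n < m) :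
    coeff n ((Lps vp) ^ m) = 0 := by
  rw [coeff_Lpow]
  refine Finset.sum_eq_zero fun l hl => ?_
  rw [mem_comps] at hl
  have := length_le_sum_of_pos l hl.2
  rw [if_neg]
  omega

/-- Truncated series `∑_{m ≤ N} a m • L^m`. -/
noncomputable def Fser (vp : ℕ → K) (a : ℕ → K) (N : ℕ) : PowerSeries K :=
  ∑ m ∈ Finset.range (N+1), a m • (Lps vp) ^ m

lemma coeff_Fser (vp a : ℕ → K) (N n : ℕ) :
    coeff n (Fser vp a N) = ∑ m ∈ Finset.range (N+1), a m * coeff n ((Lps vp) ^ m) := by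
  rw [Fser, map_sum]
  refine Finset.sum_congr rfl fun m _ => ?_
  rw [map_smul, smul_eq_mul]

lemma coeff_Fser_stable (vp a : ℕ → K) {N n : ℕ} (h : n ≤ N) :
    coeff n (Fser vp a N) = coeff n (Fser vp a n) := by
  rw [coeff_Fser, coeff_Fser]
  refine (Finset.sum_subset (by intro m hm; rw [Finset.mem_range] at *; omega)
    (fun m _ hm => ?_)).symm
  rw [Finset.mem_range, not_lt] at hm
  rw [coeff_Lpow_eq_zero vp (by omega), mul_zero]

lemma T_eq_coeff (vp a : ℕ → K) (n : ℕ) :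
    (∑ c : Composition n, a c.length * ((c.blocks.map vp).prod))
      = coeff n (Fser vp a n) := by
  rw [sum_comps n (fun l => a l.length * ((l.map vp).prod)), coeff_Fser]
  have : ∀ m ∈ Finset.range (n+1), a m * coeff n ((Lps vp) ^ m)
      = ∑ l ∈ comps n, if l.length = m then a m * ((l.map vp).prod) else 0 := by
    intro m _
    rw [coeff_Lpow, Finset.mul_sum]
    exact Finset.sum_congr rfl fun l _ => by rw [mul_ite, mul_zero]
  rw [Finset.sum_congr rfl this, Finset.sum_comm]
  refine Finset.sum_congr rfl fun l hl => ?_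
  rw [mem_comps] at hl
  have hle : l.length ≤ n := hl.1 ▸ length_le_sum_of_pos l hl.2
  have : ∀ m ∈ Finset.range (n+1), (if l.length = m then a m * ((l.map vp).prod) else 0)
      = if m = l.length then a l.length * ((l.map vp).prod) else 0 := by
    intro m _
    by_cases h : m = l.length
    · rw [if_pos h.symm, if_pos h, h]
    · rw [if_neg (fun hh => h hh.symm), if_neg h]
  rw [Finset.sum_congr rfl this, Finset.sum_ite_eq' (Finset.range (n+1)) l.length
    (fun _ => a l.length * ((l.map vp).prod)), if_pos (Finset.mem_range.2 (by omega))]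

end Scalar

section Identities
open Finset PowerSeries
variable {K : Type} [Field K] [CharZero K]

/-- exp-type part weights. -/
noncomputable def vpexp (K : Type) [Field K] : ℕ → K := fun k => ((k.factorial : ℕ) : K)⁻¹
/-- log-type part weights. -/
noncomputable def vplog (K : Type) [Field K] : ℕ → K :=
  fun k => (-1 : K) ^ (k - 1) * ((k : ℕ) : K)⁻¹

lemma neg_Lps (vp : ℕ → K) : -Lps vp = Lps (fun k => -(vp k)) := by
  ext n
  simp only [map_neg, coeff_Lps]
  split_ifs <;> simp

lemma coeff_neg_Lpow_eq_zero (vp : ℕ → K) {m n : ℕ} (h : n < m) :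
    coeff n ((-(Lps vp)) ^ m) = 0 := by
  rw [neg_Lps, coeff_Lpow_eq_zero _ h]

lemma dG_eq : d⁄dX K (Lps (vpexp K)) = 1 + Lps (vpexp K) := by
  ext n
  rw [coeff_derivative, coeff_Lps, map_add, coeff_one, coeff_Lps]
  cases n with
  | zero => simp [vpexp]
  | succ j =>
    rw [if_neg (Nat.succ_ne_zero _), if_neg (Nat.succ_ne_zero _), if_neg (Nat.succ_ne_zero _),
      zero_add]
    have hfact : (((j+1).factorial : ℕ) : K) ≠ 0 := Nat.cast_ne_zero.2 (Nat.factorial_ne_zero _)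
    have hc : ((j:K) + 1 + 1) ≠ 0 := by
      have h2 : ((j + 2 : ℕ) : K) ≠ 0 := Nat.cast_ne_zero.2 (by omega)
      push_cast at h2
      intro h; exact h2 (by linear_combination h)
    simp only [vpexp]
    rw [Nat.factorial_succ (j+1)]
    push_cast
    field_simp

lemma dH_eq (N : ℕ) :
    d⁄dX K (Fser (vpexp K) (vplog K) N) = 1 - (-(Lps (vpexp K))) ^ N := by
  have hgeom := geom_sum_mul (-(Lps (vpexp K))) N
  have key : d⁄dX K (Fser (vpexp K) (vplog K) N)
      = (∑ j ∈ Finset.range N, (-(Lps (vpexp K))) ^ j) * (1 + Lps (vpexp K)) := by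
    rw [Fser, map_sum, Finset.sum_range_succ', Finset.sum_mul]
    have h0 : d⁄dX K (vplog K 0 • Lps (vpexp K) ^ 0) = 0 := by
      simp [vplog]
    rw [h0, add_zero]
    refine Finset.sum_congr rfl fun j _ => ?_
    rw [Derivation.map_smul, Derivation.leibniz_pow, dG_eq]
    have hnz : ((j + 1 : ℕ) : K) ≠ 0 := Nat.cast_ne_zero.2 (Nat.succ_ne_zero _)
    have hsm : (j + 1) • ((Lps (vpexp K)) ^ (j + 1 - 1) • (1 + Lps (vpexp K)))
        = ((j + 1 : ℕ) : K) • ((Lps (vpexp K)) ^ j * (1 + Lps (vpexp K))) := by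
      rw [← Nat.cast_smul_eq_nsmul K, smul_eq_mul, Nat.add_sub_cancel]
    have hcoef : vplog K (j + 1) * ((j + 1 : ℕ) : K) = (-1 : K) ^ j := by
      simp only [vplog, Nat.add_sub_cancel]
      rw [mul_assoc, inv_mul_cancel₀ hnz, mul_one]
    rw [hsm, smul_smul, hcoef, smul_eq_C_mul, map_pow, map_neg, map_one, neg_pow]
    ring
  rw [key]
  linear_combination -hgeom
end Identities
section Identities2
open Finset PowerSeries
variable {K : Type} [Field K] [CharZero K]

lemma identity2 (k : ℕ) (hk : 0 < k) :
    (∑ c : Composition k, vplog K c.length * ((c.blocks.map (vpexp K)).prod))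
      = if k = 1 then 1 else 0 := by
  obtain ⟨n, rfl⟩ : ∃ n, k = n + 1 := ⟨k - 1, by omega⟩
  rw [T_eq_coeff]
  have hcoeff := congrArg (coeff n) (dH_eq (K := K) (n + 1))
  rw [coeff_derivative, map_sub, coeff_one,
    coeff_neg_Lpow_eq_zero _ (Nat.lt_succ_self n), sub_zero] at hcoeff
  have hnz : ((n : K) + 1) ≠ 0 := Nat.cast_add_one_ne_zero n
  by_cases hn : n = 0
  · subst hn
    rw [if_pos rfl] at hcoeff
    rw [if_pos rfl]
    have : ((0 : ℕ) : K) + 1 = 1 := by norm_num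
    rw [this, mul_one] at hcoeff
    exact hcoeff
  · rw [if_neg hn] at hcoeff
    rw [if_neg (by omega)]
    rcases mul_eq_zero.1 hcoeff with h | h
    · exact h
    · exact absurd h hnz

lemma hdL_eq : (1 + PowerSeries.X) * d⁄dX K (Lps (vplog K)) = 1 := by
  ext n
  rw [add_mul, one_mul, map_add, coeff_derivative, coeff_Lps, if_neg (Nat.succ_ne_zero n)]
  cases n with
  | zero =>
    rw [coeff_zero_X_mul, add_zero, coeff_one, if_pos rfl]
    simp [vplog]
  | succ m =>
    rw [coeff_succ_X_mul, coeff_derivative, coeff_Lps, if_neg (Nat.succ_ne_zero m), coeff_one,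
      if_neg (Nat.succ_ne_zero m)]
    have h1 : ((m + 1 : ℕ) : K) ≠ 0 := Nat.cast_ne_zero.2 (Nat.succ_ne_zero m)
    have h2 : ((m + 2 : ℕ) : K) ≠ 0 := Nat.cast_ne_zero.2 (by omega)
    have e1 : ((m + 1 : ℕ) : K) + 1 = ((m + 2 : ℕ) : K) := by push_cast; ring
    have e2 : ((m : ℕ) : K) + 1 = ((m + 1 : ℕ) : K) := by push_cast; ring
    simp only [vplog, Nat.add_sub_cancel]
    rw [e1, e2, mul_assoc, inv_mul_cancel₀ h2, mul_one, mul_assoc, inv_mul_cancel₀ h1, mul_one,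
      pow_succ]
    ring

lemma dF_exp (N : ℕ) : d⁄dX K (Fser (vplog K) (vpexp K) (N+1))
    = Fser (vplog K) (vpexp K) N * d⁄dX K (Lps (vplog K)) := by
  rw [Fser, map_sum, Finset.sum_range_succ', Fser, Finset.sum_mul]
  have h0 : d⁄dX K (vpexp K 0 • Lps (vplog K) ^ 0) = 0 := by
    rw [pow_zero, Derivation.map_smul, Derivation.map_one_eq_zero, smul_zero]
  rw [h0, add_zero]
  refine Finset.sum_congr rfl fun j _ => ?_
  rw [Derivation.map_smul, Derivation.leibniz_pow, Nat.add_sub_cancel,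
    ← Nat.cast_smul_eq_nsmul K (j+1) ((Lps (vplog K)) ^ j • d⁄dX K (Lps (vplog K))),
    smul_smul]
  have hfact : ((j.factorial : ℕ) : K) ≠ 0 := Nat.cast_ne_zero.2 (Nat.factorial_ne_zero _)
  have hc : ((j : K) + 1) ≠ 0 := Nat.cast_add_one_ne_zero j
  have hcoef : vpexp K (j+1) * ((j + 1 : ℕ) : K) = vpexp K j := by
    simp only [vpexp]
    rw [Nat.factorial_succ j]
    push_cast
    field_simp
  rw [hcoef, smul_eq_mul, smul_mul_assoc]

lemma hmain_exp (n : ℕ) : (1 + PowerSeries.X) * d⁄dX K (Fser (vplog K) (vpexp K) (n+1))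
    = Fser (vplog K) (vpexp K) n := by
  rw [dF_exp, mul_left_comm, hdL_eq, mul_one]

lemma cF0 : coeff 0 (Fser (vplog K) (vpexp K) 0) = 1 := by
  rw [Fser]
  simp [vpexp]

lemma cF1 : coeff 1 (Fser (vplog K) (vpexp K) 1) = 1 := by
  have h := congrArg (coeff 0) (hmain_exp (K := K) 1)
  rw [add_mul, one_mul, map_add, coeff_zero_X_mul, add_zero, coeff_derivative,
    coeff_Fser_stable _ _ (show (1:ℕ) ≤ 2 by omega),
    coeff_Fser_stable _ _ (show (0:ℕ) ≤ 1 by omega), cF0] at h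
  rw [← h]
  norm_num

lemma recF (m : ℕ) :
    coeff (m+2) (Fser (vplog K) (vpexp K) (m+2)) * (((m+1 : ℕ) : K) + 1)
      + coeff (m+1) (Fser (vplog K) (vpexp K) (m+1)) * (((m : ℕ) : K) + 1)
      = coeff (m+1) (Fser (vplog K) (vpexp K) (m+1)) := by
  have h := congrArg (coeff (m+1)) (hmain_exp (K := K) (m+2))
  rw [add_mul, one_mul, map_add, coeff_succ_X_mul, coeff_derivative, coeff_derivative,
    coeff_Fser_stable _ _ (show m+2 ≤ m+3 by omega),
    coeff_Fser_stable _ _ (show m+1 ≤ m+3 by omega),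
    coeff_Fser_stable _ _ (show m+1 ≤ m+2 by omega)] at h
  exact h

lemma cF_big : ∀ m : ℕ, coeff (m+2) (Fser (vplog K) (vpexp K) (m+2)) = 0 := by
  intro m
  induction m with
  | zero =>
    have h := recF (K := K) 0
    rw [cF1] at h
    have h2 : coeff 2 (Fser (vplog K) (vpexp K) 2) * (((1:ℕ):K) + 1) = 0 := by
      linear_combination h
    rcases mul_eq_zero.1 h2 with h3 | h3
    · exact h3
    · exact absurd h3 (by norm_num)
  | succ j ih =>
    have h := recF (K := K) (j+1)
    rw [ih] at h
    have h2 : coeff (j+1+2) (Fser (vplog K) (vpexp K) (j+1+2)) * (((j+1+1 : ℕ) : K) + 1) = 0 := by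
      linear_combination h
    rcases mul_eq_zero.1 h2 with h3 | h3
    · exact h3
    · exact absurd h3 (Nat.cast_add_one_ne_zero (j+1+1))

lemma identity1 (k : ℕ) (hk : 0 < k) :
    (∑ c : Composition k, vpexp K c.length * ((c.blocks.map (vplog K)).prod))
      = if k = 1 then 1 else 0 := by
  rw [T_eq_coeff]
  match k, hk with
  | 1, _ => rw [if_pos rfl]; exact cF1
  | (m+2), _ =>
    rw [if_neg (by omega)]
    exact cF_big m

end Identities2

/-- The Hoffman exponential `exp_H(w) = Σ_{λ ∈ C(|w|)} (1/Γ(λ)) λ ∘ w`. -/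
noncomputable def expH {A : Type} [Inhabited A] {K : Type} [Field K]
    (br : A → A → A) (w : List A) : List A →₀ K :=
  ∑ c : Composition w.length,
    (((c.blocks.map Nat.factorial).prod : K))⁻¹ • Finsupp.single (compAction br w c) 1

/-- The Hoffman logarithm
`log_H(w) = Σ_{λ ∈ C(|w|)} ((-1)^{Σ(λ)-|λ|}/Π(λ)) λ ∘ w`. -/
noncomputable def logH {A : Type} [Inhabited A] {K : Type} [Field K]
    (br : A → A → A) (w : List A) : List A →₀ K :=
  ∑ c : Composition w.length,
    (((-1 : K) ^ (c.blocks.sum - c.length)) / ((c.blocks.prod : ℕ) : K)) •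
      Finsupp.single (compAction br w c) 1

/-- Linear extension of `exp_H` to `K⟨A⟩`. -/
noncomputable def expHExt {A : Type} [Inhabited A] {K : Type} [Field K]
    (br : A → A → A) (x : List A →₀ K) : List A →₀ K :=
  x.sum fun w c => c • expH br w

/-- Linear extension of `log_H` to `K⟨A⟩`. -/
noncomputable def logHExt {A : Type} [Inhabited A] {K : Type} [Field K]
    (br : A → A → A) (x : List A →₀ K) : List A →₀ K :=
  x.sum fun w c => c • logH br w

section Glue
variable {A : Type} [Inhabited A] {K : Type} [Field K] [CharZero K]

lemma Wexp_eq : ∀ (l : List ℕ),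
    (((l.map Nat.factorial).prod : ℕ) : K)⁻¹ = (l.map (vpexp K)).prod
  | [] => by simp
  | a :: t => by
    rw [List.map_cons, List.prod_cons, Nat.cast_mul, mul_inv, Wexp_eq t, List.map_cons,
      List.prod_cons]
    rfl

lemma Wlog_eq : ∀ (l : List ℕ), (∀ x ∈ l, 0 < x) →
    ((-1 : K) ^ (l.sum - l.length)) / ((l.prod : ℕ) : K) = (l.map (vplog K)).prod
  | [], _ => by simp
  | a :: t, h => by
    have ha := h a List.mem_cons_self
    have ht : ∀ x ∈ t, 0 < x := fun x hx => h x (List.mem_cons_of_mem a hx)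
    have hlen := length_le_sum_of_pos t ht
    have hexp : (a :: t).sum - (a :: t).length = (a - 1) + (t.sum - t.length) := by
      simp only [List.sum_cons, List.length_cons]
      omega
    rw [hexp, pow_add, List.map_cons, List.prod_cons, List.prod_cons, ← Wlog_eq t ht,
      Nat.cast_mul, div_eq_mul_inv, div_eq_mul_inv, mul_inv]
    show _ = (-1 : K) ^ (a - 1) * ((a : ℕ) : K)⁻¹ * _
    ring

lemma Wlog_comp {n : ℕ} (c : Composition n) :
    ((-1 : K) ^ (c.blocks.sum - c.length)) / ((c.blocks.prod : ℕ) : K)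
      = (c.blocks.map (vplog K)).prod :=
  Wlog_eq c.blocks (fun x hx => c.blocks_pos hx)

/-- Linear-map version of the linear extensions. -/
noncomputable def extLM (h : List A → (List A →₀ K)) :
    (List A →₀ K) →ₗ[K] (List A →₀ K) :=
  Finsupp.lsum K fun w => LinearMap.toSpanSingleton K _ (h w)

lemma extLM_single (h : List A → (List A →₀ K)) (w : List A) (b : K) :
    extLM h (Finsupp.single w b) = b • h w := by
  rw [extLM, Finsupp.lsum_single, LinearMap.toSpanSingleton_apply]

lemma expHExt_eq (br : A → A → A) (x : List A →₀ K) :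
    expHExt br x = extLM (expH br) x := by
  rw [expHExt, extLM, Finsupp.lsum_apply]
  rfl

lemma logHExt_eq (br : A → A → A) (x : List A →₀ K) :
    logHExt br x = extLM (logH br) x := by
  rw [logHExt, extLM, Finsupp.lsum_apply]
  rfl

lemma key1 (br : A → A → A) (hassoc : ∀ a b c, br (br a b) c = br a (br b c)) (w : List A) :
    extLM (expH br) (logH br w) = Finsupp.single w (1 : K) := by
  rw [logH, map_sum]
  have hterm : ∀ c : Composition w.length,
      extLM (expH br) ((((-1 : K) ^ (c.blocks.sum - c.length)) / ((c.blocks.prod : ℕ) : K)) •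
        Finsupp.single (compAction br w c) 1)
      = ((c.blocks.map (vplog K)).prod) •
          ∑ lam : Composition (compAction br w c).length,
            ((lam.blocks.map (vpexp K)).prod) •
              Finsupp.single (compAction br (compAction br w c) lam) (1 : K) := by
    intro c
    rw [map_smul, extLM_single, one_smul, Wlog_comp, expH]
    congr 1
    refine Finset.sum_congr rfl fun lam _ => ?_
    rw [Wexp_eq]
  rw [Finset.sum_congr rfl (fun c _ => hterm c)]
  exact master br hassoc (vplog K) (vpexp K) (fun k hk => identity1 k hk) w

lemma key2 (br : A → A → A) (hassoc : ∀ a b c, br (br a b) c = br a (br b c)) (w : List A) :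
    extLM (logH br) (expH br w) = Finsupp.single w (1 : K) := by
  rw [expH, map_sum]
  have hterm : ∀ c : Composition w.length,
      extLM (logH br) ((((c.blocks.map Nat.factorial).prod : K))⁻¹ •
        Finsupp.single (compAction br w c) 1)
      = ((c.blocks.map (vpexp K)).prod) •
          ∑ lam : Composition (compAction br w c).length,
            ((lam.blocks.map (vplog K)).prod) •
              Finsupp.single (compAction br (compAction br w c) lam) (1 : K) := by
    intro c
    rw [map_smul, extLM_single, one_smul, Wexp_eq, logH]
    congr 1
    refine Finset.sum_congr rfl fun lam _ => ?_
    rw [Wlog_comp]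
  rw [Finset.sum_congr rfl (fun c _ => hterm c)]
  exact master br hassoc (vpexp K) (vplog K) (fun k hk => identity2 k hk) w

end Glue

/-- **`log_H` is a two-sided inverse of `exp_H` on `K⟨A⟩`:**
`exp_H ∘ log_H = id` and `log_H ∘ exp_H = id`. -/
theorem expH_logH_inverse
    {A : Type} [Inhabited A] [DecidableEq A] {K : Type} [Field K] [CharZero K]
    (br : A → A → A)
    (hbr_comm : ∀ a b, br a b = br b a)
    (hbr_assoc : ∀ a b c, br (br a b) c = br a (br b c)) :
    (∀ x : List A →₀ K, expHExt br (logHExt br x) = x)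
      ∧ (∀ x : List A →₀ K, logHExt br (expHExt br x) = x) := by
  have H1 : ∀ x : List A →₀ K, extLM (expH br) (extLM (logH br) x) = x := by
    intro x
    induction x using Finsupp.induction_linear with
    | zero => simp
    | add f g hf hg => rw [map_add, map_add, hf, hg]
    | single w b =>
      rw [extLM_single, map_smul, key1 br hbr_assoc w, Finsupp.smul_single, smul_eq_mul, mul_one]
  have H2 : ∀ x : List A →₀ K, extLM (logH br) (extLM (expH br) x) = x := by
    intro x
    induction x using Finsupp.induction_linear with
    | zero => simp
    | add f g hf hg => rw [map_add, map_add, hf, hg]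
    | single w b =>
      rw [extLM_single, map_smul, key2 br hbr_assoc w, Finsupp.smul_single, smul_eq_mul, mul_one]
  constructor
  · intro x
    rw [logHExt_eq, expHExt_eq, H1]
  · intro x
    rw [expHExt_eq, logHExt_eq, H2]
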